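/- Let G be a unit disk graph and let v be a vertex of G having at least 4 neighbors of degree 1. Then any two neighbors of v of degree greater than 1 are adjacent; that is, v together with its neighbors of degree greater than 1 forms a clique. -/

import Mathlib

open Real

lemma re_mul_conj' (z w : ℂ) :
    (z * (starRingEnd ℂ) w).re = ‖z‖ * ‖w‖ * Real.cos (z.arg - w.arg) := by
  conv_lhs => rw [← Complex.norm_mul_cos_add_sin_mul_I z, ← Complex.norm_mul_cos_add_sin_mul_I w]
  simp only [← Complex.ofReal_cos, ← Complex.ofReal_sin, map_mul, Complex.conj_ofReal, map_add,
    Complex.conj_I, Complex.mul_re, Complex.mul_im, Complex.ofReal_re, Complex.ofReal_im,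
    Complex.add_re, Complex.add_im, Complex.I_re, Complex.I_im, Complex.neg_re, Complex.neg_im,
    Real.cos_sub]
  ring

lemma pigeon6 (a : Fin 6 → ℝ) (ha : ∀ i, a i ∈ Set.Ioc (-π) π) :
    ∃ i j, i ≠ j ∧ 1/2 ≤ Real.cos (a i - a j) := by
  classical
  set σ := Tuple.sort a with hσ
  have mono : Monotone (a ∘ σ) := Tuple.monotone_sort a
  set b : Fin 6 → ℝ := a ∘ σ with hb
  have hinj : Function.Injective σ := σ.injective
  have cospair : ∀ i j : Fin 6, b j - b i ≤ π/3 → b i ≤ b j →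
      1/2 ≤ Real.cos (a (σ j) - a (σ i)) := by
    intro i j h1 h2
    have he : a (σ j) - a (σ i) = b j - b i := rfl
    rw [he]
    have hm := Real.cos_le_cos_of_nonneg_of_le_pi
      (show (0:ℝ) ≤ b j - b i by linarith)
      (show π/3 ≤ π by have := Real.pi_pos; linarith) h1
    rw [Real.cos_pi_div_three] at hm
    linarith
  have hord : ∀ i j : Fin 6, i ≤ j → b i ≤ b j := fun i j h => mono h
  by_cases c0 : b 1 - b 0 ≤ π/3
  · exact ⟨σ 1, σ 0, fun h => by simpa using hinj h, cospair 0 1 c0 (hord 0 1 (by decide))⟩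
  by_cases c1 : b 2 - b 1 ≤ π/3
  · exact ⟨σ 2, σ 1, fun h => by simpa using hinj h, cospair 1 2 c1 (hord 1 2 (by decide))⟩
  by_cases c2 : b 3 - b 2 ≤ π/3
  · exact ⟨σ 3, σ 2, fun h => by simpa using hinj h, cospair 2 3 c2 (hord 2 3 (by decide))⟩
  by_cases c3 : b 4 - b 3 ≤ π/3
  · exact ⟨σ 4, σ 3, fun h => by simpa using hinj h, cospair 3 4 c3 (hord 3 4 (by decide))⟩
  by_cases c4 : b 5 - b 4 ≤ π/3
  · exact ⟨σ 5, σ 4, fun h => by simpa using hinj h, cospair 4 5 c4 (hord 4 5 (by decide))⟩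
  -- wraparound case
  refine ⟨σ 5, σ 0, fun h => by simpa using hinj h, ?_⟩
  have h50 : a (σ 5) - a (σ 0) = b 5 - b 0 := rfl
  have hub : b 5 ≤ π := (ha (σ 5)).2
  have hlb : -π < b 0 := (ha (σ 0)).1
  set δ := 2 * π - (b 5 - b 0) with hδ
  have hδ0 : 0 ≤ δ := by simp only [hδ]; linarith
  have hδ3 : δ ≤ π/3 := by simp only [hδ]; push_neg at c0 c1 c2 c3 c4; linarith
  have hc : Real.cos (b 5 - b 0) = Real.cos δ := by
    rw [show b 5 - b 0 = -δ + 2*π by simp only [hδ]; ring, Real.cos_add_two_pi, Real.cos_neg]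
  rw [h50, hc]
  have hm := Real.cos_le_cos_of_nonneg_of_le_pi hδ0
    (show π/3 ≤ π by have := Real.pi_pos; linarith) hδ3
  rw [Real.cos_pi_div_three] at hm
  linarith

lemma six_points (f : Fin 6 → ℂ) (hf : ∀ i, ‖f i‖ ≤ 1) :
    ∃ i j, i ≠ j ∧ ‖f i - f j‖ ≤ 1 := by
  obtain ⟨i, j, hij, hcos⟩ := pigeon6 (fun i => (f i).arg) (fun i => Complex.arg_mem_Ioc _)
  refine ⟨i, j, hij, ?_⟩
  have hA := hf i
  have hB := hf j
  have hA0 : 0 ≤ ‖f i‖ := norm_nonneg _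
  have hB0 : 0 ≤ ‖f j‖ := norm_nonneg _
  have h2 : ‖f i - f j‖ ^ 2 ≤ 1 := by
    rw [Complex.sq_norm, Complex.normSq_sub, re_mul_conj',
      ← Complex.sq_norm, ← Complex.sq_norm]
    nlinarith [mul_nonneg hA0 hB0, sq_nonneg (‖f i‖ - ‖f j‖),
      mul_nonneg (mul_nonneg hA0 hB0) (show (0:ℝ) ≤ Real.cos ((f i).arg - (f j).arg) - 1/2 by
        linarith)]
  nlinarith [norm_nonneg (f i - f j)]

lemma exists_four_distinct {α : Type*} [DecidableEq α] (t : Finset α) (h : 4 ≤ t.card) :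
    ∃ a b c d, a ∈ t ∧ b ∈ t ∧ c ∈ t ∧ d ∈ t ∧
      a ≠ b ∧ a ≠ c ∧ a ≠ d ∧ b ≠ c ∧ b ≠ d ∧ c ≠ d := by
  have h0 : 0 < t.card := by omega
  obtain ⟨a, ha⟩ := Finset.card_pos.1 h0
  have h1 : 0 < (t.erase a).card := by rw [Finset.card_erase_of_mem ha]; omega
  obtain ⟨b, hb⟩ := Finset.card_pos.1 h1
  have h2 : 0 < ((t.erase a).erase b).card := by
    rw [Finset.card_erase_of_mem hb, Finset.card_erase_of_mem ha]; omega
  obtain ⟨c, hc⟩ := Finset.card_pos.1 h2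
  have h3 : 0 < (((t.erase a).erase b).erase c).card := by
    rw [Finset.card_erase_of_mem hc, Finset.card_erase_of_mem hb,
      Finset.card_erase_of_mem ha]; omega
  obtain ⟨d, hd⟩ := Finset.card_pos.1 h3
  simp only [Finset.mem_erase] at hb hc hd
  exact ⟨a, b, c, d, ha, hb.2, hc.2.2, hd.2.2.2, (Ne.symm hb.1), (Ne.symm hc.2.1),
    (Ne.symm hd.2.2.1), (Ne.symm hc.1), (Ne.symm hd.2.1), (Ne.symm hd.1)⟩

noncomputable def toC (x : EuclideanSpace ℝ (Fin 2)) : ℂ := ⟨x 0, x 1⟩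

lemma dist_toC (x y : EuclideanSpace ℝ (Fin 2)) : dist (toC x) (toC y) = dist x y := by
  rw [Complex.dist_eq, EuclideanSpace.dist_eq, Complex.norm_def, Complex.normSq_apply]
  simp [toC, Fin.sum_univ_two, Real.dist_eq, sq_abs]
  ring_nf

/-- A unit disk graph: a simple graph realized by planar points, two distinct
vertices being adjacent iff their Euclidean distance is at most 1. -/
def IsUnitDiskGraph {V : Type*} (G : SimpleGraph V) : Prop :=
  ∃ p : V → EuclideanSpace ℝ (Fin 2),
    ∀ u v : V, G.Adj u v ↔ u ≠ v ∧ dist (p u) (p v) ≤ 1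

/-- If a vertex `v` of a unit disk graph has at least 4 neighbors of degree 1,
then `v` together with its neighbors of degree greater than 1 forms a clique. -/
theorem generator_big_degree_neighbors_clique {V : Type*} [Fintype V]
    (G : SimpleGraph V) (hG : IsUnitDiskGraph G) (v : V)
    (h4 : 4 ≤ {u | G.Adj v u ∧ (G.neighborSet u).ncard = 1}.ncard) :
    G.IsClique ({v} ∪ {u | G.Adj v u ∧ 1 < (G.neighborSet u).ncard}) := by
  classical
  obtain ⟨p, hp⟩ := hG
  intro x hx y hy hne
  simp only [Set.union_def, Set.mem_setOf_eq, Set.mem_singleton_iff] at hx hy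
  rcases hx with hx | hx
  · rcases hy with hy | hy
    · exact absurd (hx.trans hy.symm) hne
    · exact hx ▸ hy.1
  rcases hy with hy | hy
  · exact hy ▸ hx.1.symm
  -- main case: x, y are neighbors of v of degree > 1
  by_contra hnadj
  have hfin : ({u | G.Adj v u ∧ (G.neighborSet u).ncard = 1} : Set V).Finite :=
    Set.toFinite _
  rw [Set.ncard_eq_toFinset_card _ hfin] at h4
  obtain ⟨a, b, c, d, haS, hbS, hcS, hdS, hab, hac, had, hbc, hbd, hcd⟩ :=
    exists_four_distinct _ h4
  rw [Set.Finite.mem_toFinset] at haS hbS hcS hdS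
  -- degree-1 neighbors have neighborSet = {v}
  have hnb : ∀ u, G.Adj v u → (G.neighborSet u).ncard = 1 → G.neighborSet u = {v} := by
    intro u hu1 hu2
    obtain ⟨z, hz⟩ := Set.ncard_eq_one.1 hu2
    have hv : v ∈ G.neighborSet u := hu1.symm
    rw [hz] at hv ⊢
    rw [Set.mem_singleton_iff] at hv
    rw [hv]
  have hSadj : ∀ u, G.Adj v u → (G.neighborSet u).ncard = 1 → ∀ z, G.Adj u z → z = v := by
    intro u hu1 hu2 z hz
    have hzm : z ∈ G.neighborSet u := hz
    rwa [hnb u hu1 hu2, Set.mem_singleton_iff] at hzm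
  -- names for basic facts
  have hxv : x ≠ v := fun h => G.irrefl (h ▸ hx.1)
  have hyv : y ≠ v := fun h => G.irrefl (h ▸ hy.1)
  have hav : a ≠ v := fun h => G.irrefl (h ▸ haS.1)
  have hbv : b ≠ v := fun h => G.irrefl (h ▸ hbS.1)
  have hcv : c ≠ v := fun h => G.irrefl (h ▸ hcS.1)
  have hdv : d ≠ v := fun h => G.irrefl (h ▸ hdS.1)
  -- members of S are distinct from x and y (degrees differ)
  have hdistinct : ∀ u, (G.neighborSet u).ncard = 1 → u ≠ x ∧ u ≠ y := by
    intro u h1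
    constructor <;> rintro rfl
    · have := hx.2; omega
    · have := hy.2; omega
  obtain ⟨hax, hay⟩ := hdistinct a haS.2
  obtain ⟨hbx, hby⟩ := hdistinct b hbS.2
  obtain ⟨hcx, hcy⟩ := hdistinct c hcS.2
  obtain ⟨hdx, hdy⟩ := hdistinct d hdS.2
  -- nonadjacency facts
  have hnon : ∀ u z, G.Adj v u → (G.neighborSet u).ncard = 1 → z ≠ v → ¬ G.Adj u z :=
    fun u z h1 h2 hz h => hz (hSadj u h1 h2 z h)
  have nab : ¬ G.Adj a b := hnon a b haS.1 haS.2 hbv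
  have nac : ¬ G.Adj a c := hnon a c haS.1 haS.2 hcv
  have nad : ¬ G.Adj a d := hnon a d haS.1 haS.2 hdv
  have nbc : ¬ G.Adj b c := hnon b c hbS.1 hbS.2 hcv
  have nbd : ¬ G.Adj b d := hnon b d hbS.1 hbS.2 hdv
  have ncd : ¬ G.Adj c d := hnon c d hcS.1 hcS.2 hdv
  have nax : ¬ G.Adj a x := hnon a x haS.1 haS.2 hxv
  have nay : ¬ G.Adj a y := hnon a y haS.1 haS.2 hyv
  have nbx : ¬ G.Adj b x := hnon b x hbS.1 hbS.2 hxv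
  have nby : ¬ G.Adj b y := hnon b y hbS.1 hbS.2 hyv
  have ncx : ¬ G.Adj c x := hnon c x hcS.1 hcS.2 hxv
  have ncy : ¬ G.Adj c y := hnon c y hcS.1 hcS.2 hyv
  have ndx : ¬ G.Adj d x := hnon d x hdS.1 hdS.2 hxv
  have ndy : ¬ G.Adj d y := hnon d y hdS.1 hdS.2 hyv
  have nxy : ¬ G.Adj x y := hnadj
  -- package the six vertices
  have hadjv : ∀ i : Fin 6, G.Adj v (![a, b, c, d, x, y] i) := by
    intro i; fin_cases i
    exacts [haS.1, hbS.1, hcS.1, hdS.1, hx.1, hy.1]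
  have hwne : ∀ i j : Fin 6, i ≠ j → ![a, b, c, d, x, y] i ≠ ![a, b, c, d, x, y] j := by
    intro i j hij
    fin_cases i <;> fin_cases j <;>
      first
      | exact absurd rfl hij
      | assumption
      | exact Ne.symm (by assumption)
  have hwnadj : ∀ i j : Fin 6, i ≠ j →
      ¬ G.Adj (![a, b, c, d, x, y] i) (![a, b, c, d, x, y] j) := by
    intro i j hij
    fin_cases i <;> fin_cases j <;>
      first
      | exact absurd rfl hij
      | assumption
      | exact fun h => absurd h.symm (by assumption)
  -- six points in the unit disk around p v: two must be close
  obtain ⟨i, j, hij, habs⟩ := six_points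
    (fun i => toC (p (![a, b, c, d, x, y] i)) - toC (p v)) (by
      intro i
      have h := (hp v _).1 (hadjv i)
      calc ‖toC (p (![a, b, c, d, x, y] i)) - toC (p v)‖
          = dist (toC (p (![a, b, c, d, x, y] i))) (toC (p v)) := (Complex.dist_eq _ _).symm
        _ = dist (p (![a, b, c, d, x, y] i)) (p v) := dist_toC _ _
        _ ≤ 1 := by rw [dist_comm]; exact h.2)
  apply hwnadj i j hij
  apply (hp _ _).2
  refine ⟨hwne i j hij, ?_⟩
  have heq : (toC (p (![a, b, c, d, x, y] i)) - toC (p v)) -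
      (toC (p (![a, b, c, d, x, y] j)) - toC (p v)) =
      toC (p (![a, b, c, d, x, y] i)) - toC (p (![a, b, c, d, x, y] j)) := by ring
  rw [heq] at habs
  calc dist (p (![a, b, c, d, x, y] i)) (p (![a, b, c, d, x, y] j))
      = dist (toC (p (![a, b, c, d, x, y] i))) (toC (p (![a, b, c, d, x, y] j))) :=
        (dist_toC _ _).symm
    _ = ‖_‖ := Complex.dist_eq _ _
    _ ≤ 1 := habs
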